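/- Let R be a commutative ring, let 𝒮 be a finite set of ideals of R, each different from R, with ⋂_{𝔞 ∈ 𝒮} 𝔞 = {0}. Let ε : 𝒮 → R be a family with ε(𝔞) ∈ {0, 1} for every 𝔞 ∈ 𝒮. Then there exists x ∈ R with x − ε(𝔞) ∈ 𝔞 for all 𝔞 ∈ 𝒮 if and only if ε(𝔞) = ε(𝔟) for all 𝔞, 𝔟 ∈ 𝒮 with 𝔞 + 𝔟 ≠ R. -/
import Mathlib


/-- Lemma `idempotClem`: let `𝒮` be a finite set of proper ideals of a commutative
ring `R` with intersection `{0}`, and `ε : 𝒮 → R` a family of elements of `{0,1}`.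
There exists `x ∈ R` with `x ≡ ε(𝔞) mod 𝔞` for all `𝔞 ∈ 𝒮` if and only if
`ε(𝔞) = ε(𝔟)` whenever `𝔞 + 𝔟 ≠ R`. -/
theorem stmt_4 {R : Type*} [CommRing R] (𝒮 : Finset (Ideal R))
    (hproper : ∀ 𝔞 ∈ 𝒮, 𝔞 ≠ ⊤)
    (hinter : (⨅ 𝔞 ∈ 𝒮, 𝔞 : Ideal R) = ⊥)
    (ε : Ideal R → R) (hε : ∀ 𝔞 ∈ 𝒮, ε 𝔞 = 0 ∨ ε 𝔞 = 1) :
    (∃ x : R, ∀ 𝔞 ∈ 𝒮, x - ε 𝔞 ∈ 𝔞) ↔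
      (∀ 𝔞 ∈ 𝒮, ∀ 𝔟 ∈ 𝒮, 𝔞 + 𝔟 ≠ ⊤ → ε 𝔞 = ε 𝔟) := by
  classical
  constructor
  · rintro ⟨x, hx⟩ 𝔞 ha 𝔟 hb hsum
    by_contra hne
    -- WLOG one is 0 and the other is 1
    have key : ∀ 𝔠 ∈ 𝒮, ∀ 𝔡 ∈ 𝒮, ε 𝔠 = 0 → ε 𝔡 = 1 → 𝔠 + 𝔡 = ⊤ := by
      intro 𝔠 hc 𝔡 hd h0 h1
      have hxc : x ∈ 𝔠 := by simpa [h0] using hx 𝔠 hc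
      have hxd : x - 1 ∈ 𝔡 := by simpa [h1] using hx 𝔡 hd
      rw [Ideal.add_eq_sup, Ideal.eq_top_iff_one]
      have : (1 : R) = x - (x - 1) := by ring
      rw [this]
      exact sub_mem (Ideal.mem_sup_left hxc) (Ideal.mem_sup_right hxd)
    rcases hε 𝔞 ha with h0 | h1 <;> rcases hε 𝔟 hb with h0' | h1'
    · exact hne (h0.trans h0'.symm)
    · exact hsum (key 𝔞 ha 𝔟 hb h0 h1')
    · exact hsum (by rw [add_comm]; exact key 𝔟 hb 𝔞 ha h0' h1)
    · exact hne (h1.trans h1'.symm)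
  · intro h
    have h01 : ∀ 𝔞 ∈ 𝒮, (0 : R) ≠ 1 := by
      intro 𝔞 ha h01
      exact hproper 𝔞 ha (Ideal.eq_top_iff_one 𝔞 |>.mpr (h01 ▸ 𝔞.zero_mem))
    set S0 := 𝒮.filter (fun 𝔞 => ε 𝔞 = 0) with hS0
    set S1 := 𝒮.filter (fun 𝔞 => ε 𝔞 = 1) with hS1
    set I0 : Ideal R := ⨅ 𝔞 ∈ S0, 𝔞 with hI0
    set I1 : Ideal R := ⨅ 𝔞 ∈ S1, 𝔞 with hI1
    have hcop : IsCoprime I0 I1 := by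
      apply Ideal.isCoprime_biInf
      intro 𝔟 hb
      rw [isCoprime_comm]
      apply Ideal.isCoprime_biInf
      intro 𝔞 ha
      rw [Finset.mem_filter] at ha hb
      rw [Ideal.isCoprime_iff_sup_eq, ← Ideal.add_eq_sup]
      by_contra hne
      have := h 𝔟 hb.1 𝔞 ha.1 hne
      rw [ha.2, hb.2] at this
      exact h01 𝔞 ha.1 this.symm
    obtain ⟨a, haI, b, hbI, hab⟩ := Ideal.isCoprime_iff_exists.mp hcop
    refine ⟨a, fun 𝔞 ha => ?_⟩
    rcases hε 𝔞 ha with h0 | h1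
    · have hm : 𝔞 ∈ S0 := Finset.mem_filter.mpr ⟨ha, h0⟩
      have haI' : ∀ 𝔠 ∈ S0, a ∈ 𝔠 := by rw [hI0] at haI; simpa [Ideal.mem_iInf] using haI
      rw [h0, sub_zero]
      exact haI' 𝔞 hm
    · have hm : 𝔞 ∈ S1 := Finset.mem_filter.mpr ⟨ha, h1⟩
      have hbI' : ∀ 𝔠 ∈ S1, b ∈ 𝔠 := by rw [hI1] at hbI; simpa [Ideal.mem_iInf] using hbI
      have hb𝔞 : b ∈ 𝔞 := hbI' 𝔞 hm
      have : a - ε 𝔞 = -b := by rw [h1]; linear_combination hab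
      rw [this]
      exact neg_mem hb𝔞
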